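/- Let g : ℝ → ℝ be four times continuously differentiable with g, g', g'', g''', g'''' ∈ L²(ℝ) and with g(x), g'(x), g''(x), g'''(x) all tending to 0 as |x| → ∞. Then ∫_ℝ |g'(x)|² · |g'''(x)| dx ≤ √2 · ‖g‖_{L²} · ‖g''‖_{L²}^{5/4} · ‖g''''‖_{L²}^{3/4}. -/

import Mathlib

open MeasureTheory Filter Set intervalIntegral

/-- The `L²(ℝ)` norm `(∫ℝ |g(x)|² dx)^(1/2)`. -/
noncomputable def L2Norm (g : ℝ → ℝ) : ℝ := (∫ x : ℝ, (g x) ^ 2) ^ ((1 : ℝ) / 2)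

/-- `g ∈ L²(ℝ)`, i.e. `∫ℝ |g(x)|² dx < ∞`. -/
def MemL2 (g : ℝ → ℝ) : Prop := MeasureTheory.Integrable fun x => (g x) ^ 2


lemma L2Norm_nonneg (u : ℝ → ℝ) : 0 ≤ L2Norm u :=
  Real.rpow_nonneg (integral_nonneg fun x => sq_nonneg _) _

lemma L2Norm_sq (u : ℝ → ℝ) : L2Norm u ^ 2 = ∫ x : ℝ, (u x) ^ 2 := by
  rw [L2Norm, ← Real.rpow_natCast (_ ^ ((1:ℝ)/2)) 2,
    ← Real.rpow_mul (integral_nonneg fun x => sq_nonneg _)]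
  norm_num

lemma memLp_of_memL2 {u : ℝ → ℝ} (hc : Continuous u) (h : MemL2 u) :
    MemLp u (ENNReal.ofReal 2) (volume : Measure ℝ) := by
  have : (ENNReal.ofReal 2) = 2 := by norm_num
  rw [this]
  exact (memLp_two_iff_integrable_sq hc.aestronglyMeasurable).2 h

lemma integrable_mul_of {u v : ℝ → ℝ} (hcu : Continuous u) (hcv : Continuous v)
    (hu : MemL2 u) (hv : MemL2 v) : Integrable (fun x => u x * v x) := by
  refine (hu.add hv).mono' ((hcu.mul hcv).aestronglyMeasurable) ?_
  filter_upwards with x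
  simp only [Real.norm_eq_abs, Pi.add_apply, abs_mul]
  nlinarith [sq_nonneg (|u x| - |v x|), sq_abs (u x), sq_abs (v x),
    mul_nonneg (abs_nonneg (u x)) (abs_nonneg (v x))]

lemma cs_bound {u v : ℝ → ℝ} (hcu : Continuous u) (hcv : Continuous v)
    (hu : MemL2 u) (hv : MemL2 v) :
    ∫ x : ℝ, |u x| * |v x| ≤ L2Norm u * L2Norm v := by
  have hpq : Real.HolderConjugate 2 2 := Real.holderConjugate_iff.mpr ⟨one_lt_two, by norm_num⟩
  have H := integral_mul_norm_le_Lp_mul_Lq (μ := volume) hpq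
    (memLp_of_memL2 hcu hu) (memLp_of_memL2 hcv hv)
  have e1 : ∀ w : ℝ → ℝ, (∫ a : ℝ, ‖w a‖ ^ (2:ℝ)) = ∫ a : ℝ, (w a)^2 := by
    intro w; refine integral_congr_ae (Eventually.of_forall fun a => ?_)
    show ‖w a‖ ^ (2:ℝ) = w a ^ 2
    rw [show (2:ℝ) = ((2:ℕ):ℝ) by norm_num, Real.rpow_natCast, Real.norm_eq_abs, sq_abs]
  rw [e1, e1] at H
  calc ∫ x : ℝ, |u x| * |v x| = ∫ a : ℝ, ‖u a‖ * ‖v a‖ := by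
        refine integral_congr_ae (Eventually.of_forall fun a => ?_)
        show |u a| * |v a| = ‖u a‖ * ‖v a‖
        rw [Real.norm_eq_abs, Real.norm_eq_abs]
    _ ≤ _ := H
    _ = L2Norm u * L2Norm v := rfl

lemma tendsto_atTop_of_cocompact {f : ℝ → ℝ} (h : Tendsto f (cocompact ℝ) (nhds 0)) :
    Tendsto f atTop (nhds 0) := by
  rw [cocompact_eq_atBot_atTop] at h
  exact h.mono_left le_sup_right

lemma tendsto_atBot_of_cocompact {f : ℝ → ℝ} (h : Tendsto f (cocompact ℝ) (nhds 0)) :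
    Tendsto f atBot (nhds 0) := by
  rw [cocompact_eq_atBot_atTop] at h
  exact h.mono_left le_sup_left

lemma ibp_bound {f f' f'' : ℝ → ℝ} (hd1 : ∀ x, HasDerivAt f (f' x) x)
    (hd2 : ∀ x, HasDerivAt f' (f'' x) x) (hcf'' : Continuous f'')
    (h0 : MemL2 f) (h1 : MemL2 f') (h2 : MemL2 f'')
    (hf0 : Tendsto f (cocompact ℝ) (nhds 0)) (hf1 : Tendsto f' (cocompact ℝ) (nhds 0)) :
    ∫ x : ℝ, (f' x) ^ 2 ≤ L2Norm f * L2Norm f'' := by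
  have hcf : Continuous f := continuous_iff_continuousAt.2 fun x => (hd1 x).continuousAt
  have hcf' : Continuous f' := continuous_iff_continuousAt.2 fun x => (hd2 x).continuousAt
  set G : ℝ → ℝ := fun x => f' x * f' x + f x * f'' x with hG
  have hFder : ∀ x, HasDerivAt (fun y => f y * f' y) (G x) x := fun x => (hd1 x).mul (hd2 x)
  have hint1 : Integrable (fun x : ℝ => f' x * f' x) := by
    have := h1; simp only [MemL2] at this; simpa [sq] using this
  have hint2 : Integrable (fun x : ℝ => f x * f'' x) := integrable_mul_of hcf hcf'' h0 h2
  have hGint : Integrable G := hint1.add hint2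
  have htop : Tendsto (fun y => f y * f' y) atTop (nhds 0) := by
    simpa using (tendsto_atTop_of_cocompact hf0).mul (tendsto_atTop_of_cocompact hf1)
  have hbot : Tendsto (fun y => f y * f' y) atBot (nhds 0) := by
    simpa using (tendsto_atBot_of_cocompact hf0).mul (tendsto_atBot_of_cocompact hf1)
  have hIoi : ∫ x in Ioi (0:ℝ), G x = 0 - f 0 * f' 0 :=
    integral_Ioi_of_hasDerivAt_of_tendsto' (fun x _ => hFder x) hGint.integrableOn htop
  have hIic : ∫ x in Iic (0:ℝ), G x = f 0 * f' 0 - 0 :=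
    integral_Iic_of_hasDerivAt_of_tendsto' (fun x _ => hFder x) hGint.integrableOn hbot
  have htotal : ∫ x : ℝ, G x = 0 := by
    rw [← integral_Iic_add_Ioi hGint.integrableOn hGint.integrableOn, hIoi, hIic]; ring
  have hsplit : (∫ x : ℝ, f' x * f' x) + ∫ x : ℝ, f x * f'' x = 0 := by
    rw [← integral_add hint1 hint2]; exact htotal
  have heq : ∫ x : ℝ, (f' x) ^ 2 = - ∫ x : ℝ, f x * f'' x := by
    have : (∫ x : ℝ, (f' x)^2) = ∫ x : ℝ, f' x * f' x := by
      refine integral_congr_ae (Eventually.of_forall fun a => ?_); ring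
    linarith [this]
  rw [heq]
  calc - ∫ x : ℝ, f x * f'' x ≤ |∫ x : ℝ, f x * f'' x| := neg_le_abs _
    _ ≤ ∫ x : ℝ, |f x| * |f'' x| := by
        simpa [Real.norm_eq_abs, abs_mul] using
          norm_integral_le_integral_norm (μ := (volume : Measure ℝ)) (fun x => f x * f'' x)
    _ ≤ L2Norm f * L2Norm f'' := cs_bound hcf hcf'' h0 h2

lemma sup_sq_bound {f f' : ℝ → ℝ} (hd : ∀ x, HasDerivAt f (f' x) x) (hcf' : Continuous f')
    (h0 : MemL2 f) (h1 : MemL2 f')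
    (hf0 : Tendsto f (cocompact ℝ) (nhds 0)) (x : ℝ) :
    (f x) ^ 2 ≤ 2 * (L2Norm f * L2Norm f') := by
  have hcf : Continuous f := continuous_iff_continuousAt.2 fun x => (hd x).continuousAt
  have hder : ∀ t, HasDerivAt (fun y => f y * f y) (2 * (f t * f' t)) t := by
    intro t
    have := (hd t).mul (hd t)
    exact this.congr_deriv (by ring)
  have hint : Integrable (fun t : ℝ => 2 * (f t * f' t)) :=
    (integrable_mul_of hcf hcf' h0 h1).const_mul 2
  have hbot : Tendsto (fun y => f y * f y) atBot (nhds 0) := by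
    simpa using (tendsto_atBot_of_cocompact hf0).mul (tendsto_atBot_of_cocompact hf0)
  have hIic : ∫ t in Iic x, 2 * (f t * f' t) = f x * f x - 0 :=
    integral_Iic_of_hasDerivAt_of_tendsto' (fun t _ => hder t) hint.integrableOn hbot
  have habs : Integrable (fun t : ℝ => |f t| * |f' t|) := by
    simpa [abs_mul] using (integrable_mul_of hcf hcf' h0 h1).abs
  have step1 : ∫ t in Iic x, 2 * (f t * f' t) ≤ ∫ t in Iic x, 2 * (|f t| * |f' t|) := by
    refine integral_mono hint.integrableOn ((habs.const_mul 2).integrableOn) fun t => ?_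
    have h := le_abs_self (f t * f' t); rw [abs_mul] at h
    simp only; linarith
  have step2 : ∫ t in Iic x, 2 * (|f t| * |f' t|) ≤ ∫ t : ℝ, 2 * (|f t| * |f' t|) := by
    refine setIntegral_le_integral (habs.const_mul 2) ?_
    filter_upwards with t; positivity
  have step3 : ∫ t : ℝ, 2 * (|f t| * |f' t|) ≤ 2 * (L2Norm f * L2Norm f') := by
    rw [MeasureTheory.integral_const_mul]
    have := cs_bound hcf hcf' h0 h1
    linarith
  have : f x * f x ≤ 2 * (L2Norm f * L2Norm f') := by
    have := hIic; linarith
  nlinarith [this]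

/-- estimate (3.10). If `g ∈ C⁴` with `g, g', g'', g''', g'''' ∈ L²(ℝ)`
and `g, g', g'', g''' → 0` as `|x| → ∞`, then
`∫ |g'|² |g'''| dx ≤ √2 ‖g‖ ‖g''‖^{5/4} ‖g''''‖^{3/4}`. -/
theorem cubic_term_estimate
    (g : ℝ → ℝ) (hg : ContDiff ℝ 4 g)
    (hL2 : MemL2 g) (hL2' : MemL2 (deriv g)) (hL2'' : MemL2 (iteratedDeriv 2 g))
    (hL2''' : MemL2 (iteratedDeriv 3 g)) (hL2'''' : MemL2 (iteratedDeriv 4 g))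
    (hdecay : Tendsto g (cocompact ℝ) (nhds 0))
    (hdecay' : Tendsto (deriv g) (cocompact ℝ) (nhds 0))
    (hdecay'' : Tendsto (iteratedDeriv 2 g) (cocompact ℝ) (nhds 0))
    (hdecay''' : Tendsto (iteratedDeriv 3 g) (cocompact ℝ) (nhds 0)) :
    (∫ x : ℝ, |deriv g x| ^ 2 * |iteratedDeriv 3 g x|)
      ≤ Real.sqrt 2 * L2Norm g * L2Norm (iteratedDeriv 2 g) ^ ((5:ℝ)/4)
        * L2Norm (iteratedDeriv 4 g) ^ ((3:ℝ)/4) := by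
  -- smoothness of iterated derivatives
  have hD0 : ContDiff ℝ 1 g := hg.of_le (by norm_num)
  have hD1 : ContDiff ℝ 1 (deriv g) := by
    have := ContDiff.iterate_deriv' 1 1 (f := g) (by exact_mod_cast hg.of_le (by norm_num))
    simpa using this
  have hD2 : ContDiff ℝ 1 (iteratedDeriv 2 g) := by
    rw [iteratedDeriv_eq_iterate]
    exact ContDiff.iterate_deriv' 1 2 (by exact_mod_cast hg.of_le (by norm_num))
  have hD3 : ContDiff ℝ 1 (iteratedDeriv 3 g) := by
    rw [iteratedDeriv_eq_iterate]
    exact ContDiff.iterate_deriv' 1 3 (by exact_mod_cast hg)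
  have hc4 : Continuous (iteratedDeriv 4 g) := by
    rw [iteratedDeriv_eq_iterate]
    exact (ContDiff.iterate_deriv' 0 4 (by exact_mod_cast hg)).continuous
  have hc1 : Continuous (deriv g) := hD1.continuous
  have hc2 : Continuous (iteratedDeriv 2 g) := hD2.continuous
  have hc3 : Continuous (iteratedDeriv 3 g) := hD3.continuous
  -- derivative identities
  have e2 : iteratedDeriv 2 g = deriv (deriv g) := by
    rw [iteratedDeriv_succ, iteratedDeriv_one]
  have e3 : iteratedDeriv 3 g = deriv (iteratedDeriv 2 g) := iteratedDeriv_succ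
  have e4 : iteratedDeriv 4 g = deriv (iteratedDeriv 3 g) := iteratedDeriv_succ
  have hA0 : ∀ x, HasDerivAt g (deriv g x) x := fun x =>
    (hD0.differentiable one_ne_zero x).hasDerivAt
  have hA1 : ∀ x, HasDerivAt (deriv g) (iteratedDeriv 2 g x) x := fun x => by
    rw [e2]; exact (hD1.differentiable one_ne_zero x).hasDerivAt
  have hA2 : ∀ x, HasDerivAt (iteratedDeriv 2 g) (iteratedDeriv 3 g x) x := fun x => by
    rw [e3]; exact (hD2.differentiable one_ne_zero x).hasDerivAt
  have hA3 : ∀ x, HasDerivAt (iteratedDeriv 3 g) (iteratedDeriv 4 g x) x := fun x => by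
    rw [e4]; exact (hD3.differentiable one_ne_zero x).hasDerivAt
  -- abbreviations
  set A := L2Norm g with hA
  set B := L2Norm (deriv g) with hBdef
  set C := L2Norm (iteratedDeriv 2 g) with hCdef
  set D := L2Norm (iteratedDeriv 3 g) with hDdef
  set E := L2Norm (iteratedDeriv 4 g) with hEdef
  have hA0' : 0 ≤ A := L2Norm_nonneg _
  have hB0' : 0 ≤ B := L2Norm_nonneg _
  have hC0' : 0 ≤ C := L2Norm_nonneg _
  have hD0' : 0 ≤ D := L2Norm_nonneg _
  have hE0' : 0 ≤ E := L2Norm_nonneg _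
  -- the three integration-by-parts estimates
  have hB2 : B ^ 2 ≤ A * C := by
    rw [hBdef, L2Norm_sq]
    exact ibp_bound hA0 hA1 hc2 hL2 hL2' hL2'' hdecay hdecay'
  have hC2 : C ^ 2 ≤ B * D := by
    rw [hCdef, L2Norm_sq]
    exact ibp_bound hA1 hA2 hc3 hL2' hL2'' hL2''' hdecay' hdecay''
  have hD2' : D ^ 2 ≤ C * E := by
    rw [hDdef, L2Norm_sq]
    exact ibp_bound hA2 hA3 hc4 hL2'' hL2''' hL2'''' hdecay'' hdecay'''
  -- sup bound for g'
  have hsup : ∀ x, (deriv g x) ^ 2 ≤ 2 * (B * C) :=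
    sup_sq_bound hA1 hc2 hL2' hL2'' hdecay'
  set K := Real.sqrt (2 * (B * C)) with hKdef
  have hK0 : 0 ≤ K := Real.sqrt_nonneg _
  have hKabs : ∀ x, |deriv g x| ≤ K := fun x => by
    rw [hKdef, ← Real.sqrt_sq_eq_abs]
    exact Real.sqrt_le_sqrt (hsup x)
  -- bound the integral
  have hmulint : Integrable (fun x : ℝ => |deriv g x| * |iteratedDeriv 3 g x|) := by
    simpa [abs_mul] using (integrable_mul_of hc1 hc3 hL2' hL2''').abs
  have hIbound : (∫ x : ℝ, |deriv g x| ^ 2 * |iteratedDeriv 3 g x|) ≤ K * (B * D) := by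
    have step1 : (∫ x : ℝ, |deriv g x| ^ 2 * |iteratedDeriv 3 g x|)
        ≤ ∫ x : ℝ, K * (|deriv g x| * |iteratedDeriv 3 g x|) := by
      refine integral_mono_of_nonneg ?_ (hmulint.const_mul K) ?_
      · filter_upwards with x; positivity
      · filter_upwards with x
        have h1 : |deriv g x| ^ 2 * |iteratedDeriv 3 g x|
            = |deriv g x| * (|deriv g x| * |iteratedDeriv 3 g x|) := by ring
        rw [h1]
        exact mul_le_mul_of_nonneg_right (hKabs x) (by positivity)
    have step2 : (∫ x : ℝ, K * (|deriv g x| * |iteratedDeriv 3 g x|)) ≤ K * (B * D) := by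
      rw [MeasureTheory.integral_const_mul]
      exact mul_le_mul_of_nonneg_left (cs_bound hc1 hc3 hL2' hL2''') hK0
    linarith
  refine hIbound.trans ?_
  -- final arithmetic: raise to the fourth power
  have hY0 : 0 ≤ Real.sqrt 2 * A * C ^ ((5:ℝ)/4) * E ^ ((3:ℝ)/4) :=
    mul_nonneg (mul_nonneg (mul_nonneg (Real.sqrt_nonneg 2) hA0')
      (Real.rpow_nonneg hC0' _)) (Real.rpow_nonneg hE0' _)
  refine le_of_pow_le_pow_left₀ (n := 4) (by norm_num) hY0 ?_
  have hK2 : K ^ 2 = 2 * (B * C) := Real.sq_sqrt (by positivity)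
  have hX4 : (K * (B * D)) ^ 4 = 4 * (B ^ 6 * C ^ 2 * D ^ 4) := by
    calc (K * (B * D)) ^ 4 = (K ^ 2) ^ 2 * (B * D) ^ 4 := by ring
      _ = (2 * (B * C)) ^ 2 * (B * D) ^ 4 := by rw [hK2]
      _ = 4 * (B ^ 6 * C ^ 2 * D ^ 4) := by ring
  have hr2 : (Real.sqrt 2) ^ 2 = 2 := Real.sq_sqrt (by norm_num)
  have hc5 : (C ^ ((5:ℝ)/4)) ^ (4:ℕ) = C ^ (5:ℕ) := by
    rw [← Real.rpow_natCast (C ^ ((5:ℝ)/4)) 4, ← Real.rpow_mul hC0',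
      ← Real.rpow_natCast C 5]
    norm_num
  have he3 : (E ^ ((3:ℝ)/4)) ^ (4:ℕ) = E ^ (3:ℕ) := by
    rw [← Real.rpow_natCast (E ^ ((3:ℝ)/4)) 4, ← Real.rpow_mul hE0',
      ← Real.rpow_natCast E 3]
    norm_num
  have hY4 : (Real.sqrt 2 * A * C ^ ((5:ℝ)/4) * E ^ ((3:ℝ)/4)) ^ 4
      = 4 * (A ^ 4 * C ^ 5 * E ^ 3) := by
    calc (Real.sqrt 2 * A * C ^ ((5:ℝ)/4) * E ^ ((3:ℝ)/4)) ^ 4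
        = ((Real.sqrt 2) ^ 2) ^ 2 * A ^ 4 * (C ^ ((5:ℝ)/4)) ^ (4:ℕ)
          * (E ^ ((3:ℝ)/4)) ^ (4:ℕ) := by ring
      _ = 4 * (A ^ 4 * C ^ 5 * E ^ 3) := by rw [hr2, hc5, he3]; ring
  rw [hX4, hY4]
  -- polynomial inequality
  have h1 : B ^ 6 ≤ A ^ 3 * C ^ 3 := by
    calc B ^ 6 = (B ^ 2) ^ 3 := by ring
      _ ≤ (A * C) ^ 3 := pow_le_pow_left₀ (sq_nonneg B) hB2 3
      _ = A ^ 3 * C ^ 3 := by ring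
  have h2 : D ^ 4 ≤ C ^ 2 * E ^ 2 := by
    calc D ^ 4 = (D ^ 2) ^ 2 := by ring
      _ ≤ (C * E) ^ 2 := pow_le_pow_left₀ (sq_nonneg D) hD2' 2
      _ = C ^ 2 * E ^ 2 := by ring
  have h3 : C ^ 4 ≤ A * C ^ 2 * E := by
    have t1 : (C ^ 2) ^ 2 ≤ (B * D) ^ 2 := pow_le_pow_left₀ (sq_nonneg C) hC2 2
    have t2 : (B * D) ^ 2 ≤ (A * C) * (C * E) := by
      calc (B * D) ^ 2 = B ^ 2 * D ^ 2 := by ring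
        _ ≤ (A * C) * (C * E) := mul_le_mul hB2 hD2' (sq_nonneg D) (mul_nonneg hA0' hC0')
    nlinarith [t1, t2]
  have main : B ^ 6 * C ^ 2 * D ^ 4 ≤ A ^ 4 * C ^ 5 * E ^ 3 := by
    calc B ^ 6 * C ^ 2 * D ^ 4 = B ^ 6 * (C ^ 2 * D ^ 4) := by ring
      _ ≤ (A ^ 3 * C ^ 3) * (C ^ 2 * (C ^ 2 * E ^ 2)) := by
          refine mul_le_mul h1 (mul_le_mul_of_nonneg_left h2 (sq_nonneg C)) ?_ ?_
          · positivity
          · exact mul_nonneg (pow_nonneg hA0' 3) (pow_nonneg hC0' 3)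
      _ = C ^ 4 * (A ^ 3 * C ^ 3 * E ^ 2) := by ring
      _ ≤ (A * C ^ 2 * E) * (A ^ 3 * C ^ 3 * E ^ 2) := by
          refine mul_le_mul_of_nonneg_right h3 ?_
          exact mul_nonneg (mul_nonneg (pow_nonneg hA0' 3) (pow_nonneg hC0' 3)) (sq_nonneg E)
      _ = A ^ 4 * C ^ 5 * E ^ 3 := by ring
  linarith
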